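/- For all α, β ∈ [0, π), if C_∞ · exp(α•B) = c • (C_∞ · exp(β•B)) for some nonzero real scalar c, then α = β. In particular the camera matrices C_α := C_∞ · exp(α•B), α ∈ [0,π), are pairwise inequivalent as projection matrices, so this family contains infinitely many distinct projections. -/

import Mathlib

open Matrix

/-- The null-polarity matrix used in Cremona's method. -/
def Bmat : Matrix (Fin 4) (Fin 4) ℝ :=
  !![0, -1, 0, 0;
     1,  0, 0, 0;
     0,  0, 0, -1;
     0,  0, 1, 0]

/-- Parallel projection along the z-axis, in homogeneous coordinates. -/
def Cinf : Matrix (Fin 3) (Fin 4) ℝ :=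
  !![1, 0, 0, 0;
     0, 1, 0, 0;
     0, 0, 0, 1]

lemma hB2 : Bmat * Bmat = -1 := by
  ext i j
  fin_cases i <;> fin_cases j <;>
    simp [Bmat, Matrix.mul_apply, Fin.sum_univ_four, Matrix.one_apply,
      Matrix.vecHead, Matrix.vecTail]

noncomputable def φB : ℂ →ₐ[ℝ] Matrix (Fin 4) (Fin 4) ℝ := Complex.liftAux Bmat hB2

lemma exp_formula (α : ℝ) :
    NormedSpace.exp (α • Bmat) = Real.cos α • 1 + Real.sin α • Bmat := by
  have hI : φB Complex.I = Bmat := Complex.liftAux_apply_I Bmat hB2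
  have hcont : Continuous φB := φB.toLinearMap.continuous_of_finiteDimensional
  letI : SeminormedRing (Matrix (Fin 4) (Fin 4) ℝ) := Matrix.linftyOpSemiNormedRing
  letI : NormedRing (Matrix (Fin 4) (Fin 4) ℝ) := Matrix.linftyOpNormedRing
  letI : NormedAlgebra ℝ (Matrix (Fin 4) (Fin 4) ℝ) := Matrix.linftyOpNormedAlgebra
  have h1 : α • Bmat = φB (α • Complex.I) := by rw [_root_.map_smul, hI]
  rw [h1]; erw [← NormedSpace.map_exp φB hcont]
  have h2 : NormedSpace.exp (α • Complex.I) = Complex.exp (α * Complex.I) := by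
    rw [Complex.exp_eq_exp_ℂ]
    norm_num [Complex.real_smul]
  rw [h2, Complex.exp_mul_I, ← Complex.ofReal_cos, ← Complex.ofReal_sin,
    map_add, _root_.map_mul, hI]
  have hr : ∀ r : ℝ, φB (r : ℂ) = r • (1 : Matrix (Fin 4) (Fin 4) ℝ) := by
    intro r
    rw [← Complex.coe_algebraMap, AlgHom.commutes, Algebra.algebraMap_eq_smul_one]
  rw [hr, hr, smul_mul_assoc, one_mul]

/-- For `α, β ∈ [0, π)`, if `C∞ * exp (α • B)` and `C∞ * exp (β • B)` differ by a
nonzero scalar factor then `α = β`: the camera matrices `C_α`, `α ∈ [0, π)`, are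
pairwise inequivalent as projection matrices. -/
theorem camera_family_pairwise_inequivalent (α β : ℝ)
    (hα : α ∈ Set.Ico 0 Real.pi) (hβ : β ∈ Set.Ico 0 Real.pi)
    (h : ∃ c : ℝ, c ≠ 0 ∧
      Cinf * NormedSpace.exp (α • Bmat) =
        c • (Cinf * NormedSpace.exp (β • Bmat))) :
    α = β := by
  obtain ⟨c, hc, heq⟩ := h
  rw [exp_formula, exp_formula] at heq
  have h00 := congrFun (congrFun heq 0) 0
  have h01 := congrFun (congrFun heq 0) 1
  simp [Cinf, Bmat, Matrix.mul_apply, Fin.sum_univ_four, Matrix.one_apply,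
    Matrix.smul_apply, Matrix.add_apply, Matrix.vecHead, Matrix.vecTail,
    Matrix.vecMul, dotProduct] at h00 h01
  have hsa : 0 ≤ Real.sin α := Real.sin_nonneg_of_nonneg_of_le_pi hα.1 hα.2.le
  have hsb : 0 ≤ Real.sin β := Real.sin_nonneg_of_nonneg_of_le_pi hβ.1 hβ.2.le
  have hc2 : (c - 1) * (c + 1) = 0 := by
    linear_combination Real.sin_sq_add_cos_sq α - c ^ 2 * Real.sin_sq_add_cos_sq β -
      (Real.sin α + c * Real.sin β) * h01 - (Real.cos α + c * Real.cos β) * h00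
  rcases mul_eq_zero.1 hc2 with h1 | h1
  · have hc1 : c = 1 := by linarith
    rw [hc1, one_mul] at h00
    exact Real.injOn_cos ⟨hα.1, hα.2.le⟩ ⟨hβ.1, hβ.2.le⟩ h00
  · have hc1 : c = -1 := by linarith
    rw [hc1] at h00 h01
    have ha0 : α = 0 := by
      by_contra hne
      have : 0 < Real.sin α := Real.sin_pos_of_pos_of_lt_pi (hα.1.lt_of_ne (Ne.symm hne)) hα.2
      nlinarith
    have hb0 : β = 0 := by
      by_contra hne
      have : 0 < Real.sin β := Real.sin_pos_of_pos_of_lt_pi (hβ.1.lt_of_ne (Ne.symm hne)) hβ.2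
      nlinarith
    rw [ha0, hb0] at h00
    norm_num [Real.cos_zero] at h00
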